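/- arXiv:1110.3714 — 2 statements merged into one kernel-verified Lean document; each statement's English description precedes it below -/
import Mathlib

section
/- Let u, v be solutions of ∂w/∂t = e^{-2w}·Δw on Ω × (0,T) as in the comparison principle, and for ε > 0 define v_ε(x,t) := v(x, ε^{-1}·ln(εt+1)) + (1/2)·ln(εt+1). Then v_ε is a strict supersolution: (∂_t v_ε - e^{-2v_ε}·Δv_ε)(x,t) = ε/(2(εt+1)) > 0 for all (x,t) ∈ Ω × (0,T). -/
/-- The Euclidean Laplacian of a function on `ℝ × ℝ`, expressed via iterated partial
derivatives in each coordinate. -/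
noncomputable def lap2 (f : ℝ × ℝ → ℝ) (p : ℝ × ℝ) : ℝ :=
  deriv (fun x => deriv (fun x' => f (x', p.2)) x) p.1 +
  deriv (fun y => deriv (fun y' => f (p.1, y')) y) p.2

lemma lap2_add_const (f : ℝ × ℝ → ℝ) (c : ℝ) (p : ℝ × ℝ) :
    lap2 (fun q => f q + c) p = lap2 f p := by
  simp [lap2, deriv_add_const']

/-- Key computation in the comparison principle: if `v` solves
`∂v/∂t = e^{-2v}·Δv` on `Ω × (0,T)` (and is C² in space there), then for `ε > 0`
the modified function `v_ε(x,t) = v(x, ε⁻¹·log(εt+1)) + (1/2)·log(εt+1)` is a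
strict supersolution: `∂_t v_ε - e^{-2 v_ε}·Δ v_ε = ε/(2(εt+1)) > 0` on
`Ω × (0,T)`. -/
theorem modified_strict_supersolution
    (Ω : Set (ℝ × ℝ)) (hΩopen : IsOpen Ω) (T : ℝ) (hT : 0 < T)
    (v : ℝ × ℝ → ℝ → ℝ)
    (hv_space : ∀ t ∈ Set.Ioo (0:ℝ) T, ContDiffOn ℝ 2 (fun p => v p t) Ω)
    (hv_pde : ∀ p ∈ Ω, ∀ t ∈ Set.Ioo (0:ℝ) T,
      HasDerivAt (fun τ => v p τ)
        (Real.exp (-2 * v p t) * lap2 (fun q => v q t) p) t)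
    (ε : ℝ) (hε : 0 < ε) :
    ∀ p ∈ Ω, ∀ t ∈ Set.Ioo (0:ℝ) T,
      HasDerivAt
        (fun τ => v p (ε⁻¹ * Real.log (ε*τ + 1)) + (1/2) * Real.log (ε*τ + 1))
        (Real.exp (-2 * (v p (ε⁻¹ * Real.log (ε*t + 1)) + (1/2) * Real.log (ε*t + 1)))
            * lap2 (fun q => v q (ε⁻¹ * Real.log (ε*t + 1)) + (1/2) * Real.log (ε*t + 1)) p
          + ε / (2 * (ε*t + 1))) t := by
  intro p hp t ht
  obtain ⟨ht0, htT⟩ := ht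
  have hpos : 0 < ε * t + 1 := by nlinarith
  set s : ℝ := ε⁻¹ * Real.log (ε * t + 1) with hs_def
  have hs0 : 0 < s := by
    have : 0 < Real.log (ε * t + 1) := Real.log_pos (by nlinarith)
    positivity
  have hsT : s < T := by
    have hle : Real.log (ε * t + 1) ≤ ε * t := by
      have := Real.log_le_sub_one_of_pos hpos
      linarith
    have : s ≤ t := by
      rw [hs_def]
      rw [inv_mul_le_iff₀ hε]
      linarith [hle]
    linarith
  -- derivative of inner time change
  have hlin : HasDerivAt (fun τ : ℝ => ε * τ + 1) ε t :=
    by simpa using ((hasDerivAt_id t).const_mul ε).add_const 1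
  have hlog : HasDerivAt (fun τ : ℝ => Real.log (ε * τ + 1)) (ε / (ε * t + 1)) t := by
    simpa using hlin.log hpos.ne'
  have hinner : HasDerivAt (fun τ : ℝ => ε⁻¹ * Real.log (ε * τ + 1))
      (ε⁻¹ * (ε / (ε * t + 1))) t := hlog.const_mul ε⁻¹
  have hv := hv_pde p hp s ⟨hs0, hsT⟩
  have hcomp : HasDerivAt (fun τ => v p (ε⁻¹ * Real.log (ε * τ + 1)))
      ((Real.exp (-2 * v p s) * lap2 (fun q => v q s) p) * (ε⁻¹ * (ε / (ε * t + 1)))) t :=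
    hv.comp t hinner
  have hhalf : HasDerivAt (fun τ : ℝ => (1/2) * Real.log (ε * τ + 1))
      ((1/2) * (ε / (ε * t + 1))) t := hlog.const_mul (1/2)
  have htot := hcomp.add hhalf
  convert htot using 1
  case e'_4 => rfl
  case e'_5 => rfl
  case e'_8 => rfl
  rw [lap2_add_const]
  have hexp : Real.exp (-2 * (v p s + (1/2) * Real.log (ε * t + 1)))
      = Real.exp (-2 * v p s) * (ε * t + 1)⁻¹ := by
    rw [show -2 * (v p s + (1/2) * Real.log (ε * t + 1))
        = -2 * v p s + (- Real.log (ε * t + 1)) by ring,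
      Real.exp_add, Real.exp_neg, Real.exp_log hpos]
  rw [hexp]
  field_simp
end

section
/- Suppose u : (0,k] × [0,1/100] → ℝ is continuous, C² in s and C¹ in t on the interior, solves ∂u/∂t = e^{-2u}·u_ss, satisfies u(s,t) ≥ -ln(sinh s) for all (s,t), u(s,0) = -ln s for s ∈ (0,k], and u(k,t) ≥ -ln k - (1/2)·ln 10 for t ∈ [0,1/100]. Then u(s,t) ≥ -ln s - (1/2)·ln 10 for all s ∈ (0,k] and t ∈ [0,1/100]. -/
open Real Set Filter Topology

lemma ev_neg_right {g : ℝ → ℝ} {x d : ℝ} (hg : HasDerivAt g d x) (h0 : g x = 0)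
    (hd : d < 0) : ∀ᶠ y in 𝓝[>] x, g y < 0 := by
  have h := (hg.hasDerivWithinAt (s := Set.Ioi x))
  rw [hasDerivWithinAt_iff_tendsto_slope] at h
  have hx : x ∉ Set.Ioi x := by simp
  rw [Set.diff_singleton_eq_self hx] at h
  have hev : ∀ᶠ y in 𝓝[>] x, slope g x y < 0 := h.eventually (eventually_lt_nhds hd)
  filter_upwards [hev, self_mem_nhdsWithin] with y hy hyx
  rw [slope_def_field, h0, sub_zero] at hy
  have hpos : 0 < y - x := sub_pos.mpr hyx
  rcases div_neg_iff.mp hy with ⟨_, hb⟩ | ⟨ha, _⟩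
  · linarith
  · exact ha

lemma second_deriv_nonneg_of_localMin {f : ℝ → ℝ} {a b x : ℝ}
    (hf : ContDiffOn ℝ 2 f (Set.Ioo a b)) (hx : x ∈ Set.Ioo a b)
    (hmin : IsLocalMin f x) : 0 ≤ deriv (deriv f) x := by
  by_contra hcon
  push_neg at hcon
  have hopen : IsOpen (Set.Ioo a b) := isOpen_Ioo
  have hnb : Set.Ioo a b ∈ 𝓝 x := hopen.mem_nhds hx
  have hd1 : ContDiffOn ℝ 1 (deriv f) (Set.Ioo a b) :=
    hf.deriv_of_isOpen hopen (by norm_num)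
  have hdiff : DifferentiableAt ℝ (deriv f) x :=
    ((hd1.differentiableOn one_ne_zero).differentiableAt hnb)
  have h0 : deriv f x = 0 := hmin.deriv_eq_zero
  have hev : ∀ᶠ y in 𝓝[>] x, deriv f y < 0 := ev_neg_right hdiff.hasDerivAt h0 hcon
  have hnb' : ∀ᶠ y in 𝓝 x, y ∈ Set.Ioo a b := hnb
  have hev2 : ∀ᶠ y in 𝓝[>] x, y ∈ Set.Ioo a b := hnb'.filter_mono nhdsWithin_le_nhds
  have hev3 : ∀ᶠ y in 𝓝[>] x, f x ≤ f y :=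
    (hmin : ∀ᶠ y in 𝓝 x, f x ≤ f y).filter_mono nhdsWithin_le_nhds
  obtain ⟨w, hw, hsub⟩ := mem_nhdsGT_iff_exists_Ioc_subset.mp
    (hev.and (hev2.and hev3))
  have hwx : x < w := hw
  have hIcc : Set.Icc x w ⊆ Set.Ioo a b := by
    intro y hy
    rcases eq_or_lt_of_le hy.1 with h | h
    · exact h ▸ hx
    · exact (hsub ⟨h, hy.2⟩).2.1
  have hanti : StrictAntiOn f (Set.Icc x w) := by
    apply strictAntiOn_of_deriv_neg (convex_Icc x w)
      ((hf.continuousOn).mono hIcc)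
    intro y hy
    rw [interior_Icc] at hy
    exact (hsub ⟨hy.1, hy.2.le⟩).1
  have h1 : f w < f x := hanti ⟨le_refl x, hwx.le⟩ ⟨hwx.le, le_refl w⟩ hwx
  have h2 : f x ≤ f w := (hsub ⟨hwx, le_refl w⟩).2.2
  linarith

lemma deriv_nonpos_of_left_min {f : ℝ → ℝ} {t₀ d : ℝ} (hf : HasDerivAt f d t₀)
    (h : ∀ᶠ t in 𝓝[<] t₀, f t₀ ≤ f t) : d ≤ 0 := by
  have hs := (hf.hasDerivWithinAt (s := Set.Iio t₀))
  rw [hasDerivWithinAt_iff_tendsto_slope] at hs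
  have hx : t₀ ∉ Set.Iio t₀ := by simp
  rw [Set.diff_singleton_eq_self hx] at hs
  refine le_of_tendsto hs ?_
  filter_upwards [h, self_mem_nhdsWithin] with t ht htlt
  rw [slope_def_field]
  apply div_nonpos_of_nonneg_of_nonpos
  · linarith
  · simp only [Set.mem_Iio] at htlt
    linarith

lemma sinh_le_two_mul {a : ℝ} (h0 : 0 ≤ a) (h1 : a ≤ 1) : Real.sinh a ≤ 2 * a := by
  have hmono : MonotoneOn (fun x => 2 * x - Real.sinh x) (Set.Icc (0:ℝ) 1) := by
    apply monotoneOn_of_deriv_nonneg (convex_Icc 0 1)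
      (Continuous.continuousOn (by fun_prop))
    · intro x hx
      exact (((hasDerivAt_id x).const_mul 2).sub (Real.hasDerivAt_sinh x)).differentiableAt.differentiableWithinAt
    · intro x hx
      rw [interior_Icc] at hx
      have hd : deriv (fun x => 2 * x - Real.sinh x) x = 2 - Real.cosh x := by
        have := (((hasDerivAt_id x).const_mul 2).sub (Real.hasDerivAt_sinh x)).deriv
        exact this.trans (by ring)
      rw [hd]
      have hc : Real.cosh x ≤ 2 := by
        rw [Real.cosh_eq]
        have h1 : Real.exp x ≤ Real.exp 1 := Real.exp_le_exp.mpr hx.2.le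
        have h2 : Real.exp 1 < 2.7182818286 := Real.exp_one_lt_d9
        have h3 : Real.exp (-x) ≤ 1 := Real.exp_le_one_iff.mpr (by linarith [hx.1])
        linarith
      linarith
  have := hmono (Set.left_mem_Icc.mpr (by norm_num)) ⟨h0, h1⟩ h0
  simpa using this

lemma le_of_forall_small_add {y s d₀ : ℝ} (hd : 0 < d₀)
    (h : ∀ δ, 0 < δ → δ ≤ d₀ → y ≤ s + δ) : y ≤ s := by
  by_contra hlt
  push_neg at hlt
  have hδ : 0 < min d₀ ((y - s) / 2) := lt_min hd (by linarith)
  have := h _ hδ (min_le_left _ _)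
  have h2 : min d₀ ((y - s) / 2) ≤ (y - s) / 2 := min_le_right _ _
  linarith

/-- One-dimensional comparison argument (from Lemma 2.6): if `u` is continuous on
`(0,k] × [0,1/100]`, C² in `s` and C¹ in `t` on the interior, solves
`∂u/∂t = e^{-2u}·u_ss`, satisfies `u(s,t) ≥ -log sinh s`, `u(s,0) = -log s` on
`(0,k]`, and `u(k,t) ≥ -log k - (1/2)·log 10` for `t ∈ [0,1/100]`, then
`u(s,t) ≥ -log s - (1/2)·log 10` for all `s ∈ (0,k]`, `t ∈ [0,1/100]`. -/
theorem one_dim_comparison (k : ℝ) (hk : 0 < k) (u : ℝ → ℝ → ℝ)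
    (h_cont : ContinuousOn (fun q : ℝ × ℝ => u q.1 q.2)
      (Set.Ioc (0:ℝ) k ×ˢ Set.Icc (0:ℝ) (1/100)))
    (h_space : ∀ t ∈ Set.Ioo (0:ℝ) (1/100), ContDiffOn ℝ 2 (fun s => u s t)
      (Set.Ioo (0:ℝ) k))
    (h_pde : ∀ s ∈ Set.Ioo (0:ℝ) k, ∀ t ∈ Set.Ioo (0:ℝ) (1/100),
      HasDerivAt (fun τ => u s τ)
        (Real.exp (-2 * u s t) * deriv (deriv (fun σ => u σ t)) s) t)
    (h_lower : ∀ s ∈ Set.Ioc (0:ℝ) k, ∀ t ∈ Set.Icc (0:ℝ) (1/100),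
      u s t ≥ -Real.log (Real.sinh s))
    (h_init : ∀ s ∈ Set.Ioc (0:ℝ) k, u s 0 = -Real.log s)
    (h_bdry : ∀ t ∈ Set.Icc (0:ℝ) (1/100),
      u k t ≥ -Real.log k - (1/2) * Real.log 10) :
    ∀ s ∈ Set.Ioc (0:ℝ) k, ∀ t ∈ Set.Icc (0:ℝ) (1/100),
      u s t ≥ -Real.log s - (1/2) * Real.log 10 := by
  have hc_pos : 0 < (1/2 : ℝ) * Real.log 10 := by
    have := Real.log_pos (by norm_num : (1:ℝ) < 10); linarith
  have hexp3 : (3:ℝ) ≤ Real.exp ((1/2 : ℝ) * Real.log 10) := by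
    have h10 : Real.exp ((1/2 : ℝ) * Real.log 10) * Real.exp ((1/2 : ℝ) * Real.log 10) = 10 := by
      rw [← Real.exp_add]
      have : (1/2 : ℝ) * Real.log 10 + (1/2 : ℝ) * Real.log 10 = Real.log 10 := by ring
      rw [this, Real.exp_log]; norm_num
    nlinarith [Real.exp_pos ((1/2 : ℝ) * Real.log 10)]
  -- Key comparison on compact boxes
  have key : ∀ δ : ℝ, 0 < δ → δ ≤ 1 → ∀ T : ℝ, 0 < T → T < 1/100 →
      ∀ s ∈ Set.Icc (min δ (k/2)) k, ∀ t ∈ Set.Icc (0:ℝ) T,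
        -Real.log (s+δ) - (1/2) * Real.log 10 ≤ u s t := by
    intro δ hδ0 hδ1 T hT0 hT1
    set a := min δ (k/2) with ha
    have ha0 : 0 < a := lt_min hδ0 (by positivity)
    have hak : a < k := (min_le_right _ _).trans_lt (by linarith)
    have ha1 : a ≤ 1 := (min_le_left _ _).trans hδ1
    have haδ : a ≤ δ := min_le_left _ _
    set Q := Set.Icc a k ×ˢ Set.Icc (0:ℝ) T with hQ
    have hQsub : Q ⊆ Set.Ioc 0 k ×ˢ Set.Icc 0 (1/100) := by
      rintro ⟨x, y⟩ ⟨hx, hy⟩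
      exact ⟨⟨ha0.trans_le hx.1, hx.2⟩, ⟨hy.1, hy.2.trans hT1.le⟩⟩
    have hvcont : ContinuousOn (fun q : ℝ × ℝ => u q.1 q.2 + Real.log (q.1 + δ)) Q := by
      apply (h_cont.mono hQsub).add
      intro q hq
      have hqpos : (0:ℝ) < q.1 + δ := by
        have := hq.1.1
        have : (0:ℝ) < q.1 := ha0.trans_le this
        linarith
      have hca : ContinuousAt (fun q : ℝ × ℝ => q.1 + δ) q :=
        (continuous_fst.add continuous_const).continuousAt
      exact (hca.log (ne_of_gt hqpos)).continuousWithinAt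
    have hQc : IsCompact Q := isCompact_Icc.prod isCompact_Icc
    have hQne : Q.Nonempty := ⟨(k, 0), ⟨⟨hak.le, le_rfl⟩, ⟨le_rfl, hT0.le⟩⟩⟩
    obtain ⟨⟨s₀, t₀⟩, hq₀Q, hq₀min⟩ := hQc.exists_isMinOn hQne hvcont
    have hmin' : ∀ p ∈ Q, u s₀ t₀ + Real.log (s₀+δ) ≤ u p.1 p.2 + Real.log (p.1+δ) := by
      intro p hp
      simpa using hq₀min hp
    have hs0a : a ≤ s₀ := hq₀Q.1.1
    have hs0k : s₀ ≤ k := hq₀Q.1.2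
    have ht00 : 0 ≤ t₀ := hq₀Q.2.1
    have ht0T : t₀ ≤ T := hq₀Q.2.2
    have hs0pos : 0 < s₀ := ha0.trans_le hs0a
    suffices hS : -((1/2 : ℝ) * Real.log 10) ≤ u s₀ t₀ + Real.log (s₀ + δ) by
      intro s hs t ht
      have := hmin' (s, t) ⟨hs, ht⟩
      simp only at this
      linarith
    by_contra hneg
    push_neg at hneg
    -- t₀ > 0
    have ht0pos : 0 < t₀ := by
      rcases ht00.lt_or_eq with h | h
      · exact h
      · exfalso
        have hinit := h_init s₀ ⟨hs0pos, hs0k⟩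
        rw [← h, hinit] at hneg
        have hlog : Real.log s₀ ≤ Real.log (s₀ + δ) := Real.log_le_log hs0pos (by linarith)
        linarith
    -- s₀ < k
    have hs0k' : s₀ < k := by
      rcases hs0k.lt_or_eq with h | h
      · exact h
      · exfalso
        have hb := h_bdry t₀ ⟨ht00, ht0T.trans hT1.le⟩
        have hlog : Real.log k ≤ Real.log (k + δ) := Real.log_le_log hk (by linarith)
        rw [h] at hneg
        linarith
    -- a < s₀
    have hs0a' : a < s₀ := by
      rcases hs0a.lt_or_eq with h | h
      · exact h
      · exfalso
        have hl := h_lower s₀ ⟨hs0pos, hs0k⟩ t₀ ⟨ht00, ht0T.trans hT1.le⟩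
        rw [← h] at hneg hl
        have hsinh_pos : 0 < Real.sinh a := Real.sinh_pos_iff.mpr ha0
        have hsinh2 : Real.sinh a ≤ 2 * a := sinh_le_two_mul ha0.le ha1
        have hE : Real.sinh a < (a + δ) * Real.exp ((1/2 : ℝ) * Real.log 10) := by
          have h3 : (3:ℝ) * (a + δ) ≤ (a + δ) * Real.exp ((1/2 : ℝ) * Real.log 10) := by
            nlinarith
          nlinarith
        have hlog : Real.log (Real.sinh a) <
            Real.log (a + δ) + (1/2 : ℝ) * Real.log 10 := by
          have := Real.log_lt_log hsinh_pos hE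
          rwa [Real.log_mul (by positivity) (Real.exp_pos _).ne', Real.log_exp] at this
        linarith
    have hs0I : s₀ ∈ Set.Ioo (0:ℝ) k := ⟨hs0pos, hs0k'⟩
    have ht0I : t₀ ∈ Set.Ioo (0:ℝ) (1/100) := ⟨ht0pos, ht0T.trans_lt hT1⟩
    -- local min in space
    have hloc : IsLocalMin (fun σ => u σ t₀ + Real.log (σ + δ)) s₀ := by
      have hmem : Set.Ioo a k ∈ 𝓝 s₀ := isOpen_Ioo.mem_nhds ⟨hs0a', hs0k'⟩
      filter_upwards [hmem] with σ hσ
      exact hmin' (σ, t₀) ⟨⟨hσ.1.le, hσ.2.le⟩, ht00, ht0T⟩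
    have hgC : ContDiffOn ℝ 2 (fun σ => u σ t₀ + Real.log (σ + δ)) (Set.Ioo a k) := by
      apply ContDiffOn.add
      · exact (h_space t₀ ht0I).mono (Set.Ioo_subset_Ioo ha0.le le_rfl)
      · apply ContDiffOn.log
        · exact (contDiff_id.add contDiff_const).contDiffOn
        · intro x hx
          have : 0 < x := ha0.trans hx.1
          positivity
    have hsd : 0 ≤ deriv (deriv (fun σ => u σ t₀ + Real.log (σ + δ))) s₀ :=
      second_deriv_nonneg_of_localMin hgC ⟨hs0a', hs0k'⟩ hloc
    -- compute second derivative of comparison part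
    have hderiv_eq : ∀ σ ∈ Set.Ioo (0:ℝ) k,
        deriv (fun σ => u σ t₀ + Real.log (σ + δ)) σ
          = deriv (fun σ => u σ t₀) σ + (σ + δ)⁻¹ := by
      intro σ hσ
      have hfd : DifferentiableAt ℝ (fun σ => u σ t₀) σ :=
        (((h_space t₀ ht0I).differentiableOn (by norm_num)).differentiableAt
          (isOpen_Ioo.mem_nhds hσ))
      have hld : HasDerivAt (fun x => Real.log (x + δ)) (σ + δ)⁻¹ σ := by
        have h1 : HasDerivAt (fun x : ℝ => x + δ) 1 σ := (hasDerivAt_id σ).add_const δ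
        have hne : (σ + δ) ≠ 0 := by
          have := hσ.1; positivity
        have := (Real.hasDerivAt_log hne).comp σ h1
        rw [mul_one] at this
        exact this
      exact (hfd.hasDerivAt.add hld).deriv
    have hEq : deriv (fun σ => u σ t₀ + Real.log (σ + δ))
        =ᶠ[𝓝 s₀] fun σ => deriv (fun σ => u σ t₀) σ + (σ + δ)⁻¹ := by
      filter_upwards [isOpen_Ioo.mem_nhds hs0I] with σ hσ using hderiv_eq σ hσ
    have hdd : deriv (deriv (fun σ => u σ t₀ + Real.log (σ + δ))) s₀
        = deriv (deriv (fun σ => u σ t₀)) s₀ - ((s₀ + δ)^2)⁻¹ := by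
      rw [hEq.deriv_eq]
      have hdf2 : DifferentiableAt ℝ (deriv (fun σ => u σ t₀)) s₀ :=
        ((((h_space t₀ ht0I).deriv_of_isOpen isOpen_Ioo (by norm_num) : ContDiffOn ℝ 1 _ _)).differentiableOn
          one_ne_zero).differentiableAt (isOpen_Ioo.mem_nhds hs0I)
      have hne : (s₀ + δ) ≠ 0 := by positivity
      have hinv : HasDerivAt (fun σ : ℝ => (σ + δ)⁻¹) (-1 / (s₀ + δ)^2) s₀ := by
        have := ((hasDerivAt_id s₀).add_const δ).inv hne
        exact this
      have hsum := (hdf2.hasDerivAt.add hinv).deriv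
      refine hsum.trans ?_
      ring
    have hfdd : ((s₀ + δ)^2)⁻¹ ≤ deriv (deriv (fun σ => u σ t₀)) s₀ := by
      rw [hdd] at hsd; linarith
    -- time derivative at the minimum
    have hpde' := h_pde s₀ hs0I t₀ ht0I
    have hDpos : 0 < Real.exp (-2 * u s₀ t₀) * deriv (deriv (fun σ => u σ t₀)) s₀ :=
      mul_pos (Real.exp_pos _) (lt_of_lt_of_le (by positivity) hfdd)
    have hDnonpos : Real.exp (-2 * u s₀ t₀) * deriv (deriv (fun σ => u σ t₀)) s₀ ≤ 0 := by
      apply deriv_nonpos_of_left_min hpde'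
      have hIoi : ∀ᶠ t in 𝓝 t₀, t ∈ Set.Ioi (0:ℝ) := isOpen_Ioi.eventually_mem ht0pos
      filter_upwards [hIoi.filter_mono nhdsWithin_le_nhds, self_mem_nhdsWithin] with t ht1 ht2
      have ht2' : t < t₀ := ht2
      have := hmin' (s₀, t) ⟨⟨hs0a, hs0k⟩, ⟨le_of_lt ht1, (le_of_lt ht2').trans ht0T⟩⟩
      simp only at this
      linarith
    linarith
  -- conclusion for t < 1/100
  have main' : ∀ s ∈ Set.Ioc (0:ℝ) k, ∀ t : ℝ, 0 ≤ t → t < 1/100 →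
      -Real.log s - (1/2) * Real.log 10 ≤ u s t := by
    intro s hs t ht0 ht1
    rcases eq_or_lt_of_le ht0 with h | h
    · rw [← h, h_init s hs]
      linarith
    · have hall : ∀ δ : ℝ, 0 < δ → δ ≤ min s 1 →
          Real.exp (-(u s t + (1/2) * Real.log 10)) ≤ s + δ := by
        intro δ hδ0 hδ1
        have hδ1' : δ ≤ 1 := hδ1.trans (min_le_right _ _)
        have hδs : δ ≤ s := hδ1.trans (min_le_left _ _)
        have hkey := key δ hδ0 hδ1' t h ht1 s
          ⟨(min_le_left δ (k/2)).trans hδs, hs.2⟩ t ⟨ht0, le_rfl⟩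
        have hpos : (0:ℝ) < s + δ := by
          have := hs.1; linarith
        rw [← Real.le_log_iff_exp_le hpos]
        linarith
      have hle : Real.exp (-(u s t + (1/2) * Real.log 10)) ≤ s :=
        le_of_forall_small_add (lt_min hs.1 one_pos) hall
      have := (Real.le_log_iff_exp_le hs.1).mpr hle
      linarith
  intro s hs t ht
  rcases lt_or_eq_of_le ht.2 with hlt | heq
  · exact main' s hs t ht.1 hlt
  · have hcw : ContinuousOn (fun τ => u s τ) (Set.Icc (0:ℝ) (1/100)) := by
      have : ContinuousOn (fun τ : ℝ => ((s, τ) : ℝ × ℝ))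
          (Set.Icc (0:ℝ) (1/100)) := (continuous_const.prodMk continuous_id).continuousOn
      exact h_cont.comp this (fun τ hτ => ⟨hs, hτ⟩)
    have hmemc : (1/100 : ℝ) ∈ Set.Icc (0:ℝ) (1/100) := ⟨by norm_num, le_rfl⟩
    have htend : Filter.Tendsto (fun τ => u s τ)
        (nhdsWithin (1/100 : ℝ) (Set.Ico (0:ℝ) (1/100))) (nhds (u s (1/100))) :=
      (hcw (1/100) hmemc).tendsto.mono_left (nhdsWithin_mono _ Set.Ico_subset_Icc_self)
    have hne : (nhdsWithin (1/100 : ℝ) (Set.Ico (0:ℝ) (1/100))).NeBot := by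
      rw [← mem_closure_iff_nhdsWithin_neBot, closure_Ico (by norm_num : (0:ℝ) ≠ 1/100)]
      exact hmemc
    rw [heq]
    refine ge_of_tendsto htend ?_
    filter_upwards [self_mem_nhdsWithin] with τ hτ
    exact main' s hs τ hτ.1 hτ.2
end
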